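/- For every real number κ ≥ 10 and every integer N ≥ 2, one has (1 - (2/N)·(1 + √(1 + κ/N))⁻¹)^N < 1 - 2·(1 + √(1 + κ))⁻¹. -/

import Mathlib

set_option maxHeartbeats 800000

lemma aux_pow_bound : ∀ n : ℕ, 2 ≤ n → ∀ a : ℝ, 0 ≤ a → a ≤ 1 →
    (1 - a) ^ n ≤ 1 - n * a + n * ((n : ℝ) - 1) / 2 * a ^ 2 := by
  intro n hn
  induction n, hn using Nat.le_induction with
  | base =>
    intro a ha ha1
    push_cast
    nlinarith [sq_nonneg a]
  | succ n hn ih =>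
    intro a ha ha1
    have h := ih a ha ha1
    have hn1 : (2:ℝ) ≤ (n:ℝ) := by exact_mod_cast hn
    have h2 : (1-a)^n * (1-a) ≤ (1 - n*a + n*((n:ℝ)-1)/2*a^2) * (1-a) :=
      mul_le_mul_of_nonneg_right h (by linarith)
    have h3 : (1-a)^(n+1) = (1-a)^n * (1-a) := by ring
    have h4 : 0 ≤ (n:ℝ)*((n:ℝ)-1)/2 * a^3 := by
      apply mul_nonneg
      · apply div_nonneg _ (by norm_num)
        nlinarith
      · positivity
    push_cast
    nlinarith [h2, h3, h4]

theorem spdhg_rate_beats_pdhg_rate (κ : ℝ) (hκ : 10 ≤ κ) (N : ℕ) (hN : 2 ≤ N) :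
    (1 - (2 / (N : ℝ)) * (1 + Real.sqrt (1 + κ / N))⁻¹) ^ N
      < 1 - 2 * (1 + Real.sqrt (1 + κ))⁻¹ := by
  set t := Real.sqrt (1 + κ / N) with htdef
  set s := Real.sqrt (1 + κ) with hsdef
  have hn2 : (2:ℝ) ≤ (N:ℝ) := by exact_mod_cast hN
  have hNpos : (0:ℝ) < N := by linarith
  have hκpos : (0:ℝ) < κ := by linarith
  have hκN : 0 < κ / N := div_pos hκpos hNpos
  have ht2 : t^2 = 1 + κ / N := Real.sq_sqrt (by linarith)
  have hs2 : s^2 = 1 + κ := Real.sq_sqrt (by linarith)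
  have ht0 : 0 ≤ t := Real.sqrt_nonneg _
  have hs0 : 0 ≤ s := Real.sqrt_nonneg _
  have ht1 : 1 < t := by nlinarith
  have hs3 : 3 < s := by nlinarith
  have hκeq : (N:ℝ) * (t^2 - 1) = κ := by
    rw [ht2]; field_simp; ring
  have hts : t < s := by
    have h1 : t^2 < s^2 := by nlinarith
    exact lt_of_pow_lt_pow_left₀ 2 hs0 h1
  -- key inequality
  have hfac : 0 < (s - t) * (t*s - 2*t - 1) := by
    apply mul_pos (by linarith)
    nlinarith
  have hs2' : s^2 = 1 + (N:ℝ)*(t^2-1) := by rw [hs2, hκeq]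
  have hid : (s-1) * ((1+s)*((N:ℝ)*t+1) - (N:ℝ)*(1+t)^2)
      = (N:ℝ) * ((s-t)*(t*s-2*t-1)) + (s^2 - 1 - (N:ℝ)*(t^2-1)) := by ring
  have hpos : 0 < (s-1) * ((1+s)*((N:ℝ)*t+1) - (N:ℝ)*(1+t)^2) := by
    rw [hid]
    have : s^2 - 1 - (N:ℝ)*(t^2-1) = 0 := by rw [hs2']; ring
    rw [this]
    have := mul_pos hNpos hfac
    linarith
  have hkey : (N:ℝ)*(1+t)^2 < (1+s)*((N:ℝ)*t+1) := by
    nlinarith [hpos, hs3]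
  -- set a
  set a : ℝ := 2 / ((N:ℝ) * (1+t)) with hadef
  have h1t : (0:ℝ) < 1 + t := by linarith
  have hNne : (N:ℝ) ≠ 0 := ne_of_gt hNpos
  have h1tne : (1+t) ≠ 0 := ne_of_gt h1t
  have haeq : (2 / (N:ℝ)) * (1 + t)⁻¹ = a := by
    rw [hadef]
    field_simp
  have ha0 : 0 ≤ a := by positivity
  have ha1 : a ≤ 1 := by
    rw [hadef, div_le_one (by positivity)]
    nlinarith
  have hchain := aux_pow_bound N hN a ha0 ha1
  have hq : (N:ℝ)*a - (N:ℝ)*((N:ℝ)-1)/2*a^2 = 2*((N:ℝ)*t+1)/((N:ℝ)*(1+t)^2) := by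
    rw [hadef]; field_simp; ring
  have hfinal : 1 - (N:ℝ)*a + (N:ℝ)*((N:ℝ)-1)/2*a^2 < 1 - 2*(1+s)⁻¹ := by
    have h2 : 2*(1+s)⁻¹ = 2/(1+s) := by rw [div_eq_mul_inv]
    have h3 : 2/(1+s) < 2*((N:ℝ)*t+1)/((N:ℝ)*(1+t)^2) := by
      rw [div_lt_div_iff₀ (by linarith) (by positivity)]
      linarith [hkey]
    rw [h2]
    linarith [hq ▸ h3]
  calc (1 - (2 / (N:ℝ)) * (1 + t)⁻¹) ^ N = (1 - a)^N := by rw [haeq]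
    _ ≤ 1 - (N:ℝ)*a + (N:ℝ)*((N:ℝ)-1)/2*a^2 := hchain
    _ < 1 - 2*(1+s)⁻¹ := hfinal
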